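/- Let b_{1,2}(n) denote the total number of parts equal to 1 in the partitions pre_2(λ) as λ ranges over all binary partitions of n. Then b_{1,2}(1) = 0, b_{1,2}(2) = 1, and for every integer n ≥ 3, b_{1,2}(n) = b_{1,2}(n-1) + b_{1,2}(⌊(n+1)/2⌋) + b_{1,2}(⌈(n+1)/2⌉). -/

import Mathlib

open Finset
open scoped Classical

/-- The finset of binary partitions of `n` (all parts are powers of `2`). -/
noncomputable def binaryPartitions (n : ℕ) : Finset (Nat.Partition n) :=
  Finset.univ.filter fun π => ∀ i ∈ π.parts, ∃ k : ℕ, i = 2 ^ k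

/-- `pre₂(λ)`: the multiset of pairwise products `λ_i * λ_j` (over pairs of distinct
indices `i < j`) of the parts of the partition `λ`. -/
def pre2 {n : ℕ} (π : Nat.Partition n) : Multiset ℕ :=
  (π.parts.powersetCard 2).map Multiset.prod

/-- `b_{1,2}(n)`: the total number of parts equal to `1` in the partitions `pre₂(λ)`
as `λ` ranges over the binary partitions of `n`. -/
noncomputable def b12 (n : ℕ) : ℕ :=
  ∑ π ∈ binaryPartitions n, (pre2 π).count 1

namespace B12Aux

lemma mem_binaryPartitions {n : ℕ} {π : Nat.Partition n} :
    π ∈ binaryPartitions n ↔ ∀ i ∈ π.parts, ∃ k : ℕ, i = 2 ^ k := by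
  simp [binaryPartitions]

lemma choose_two_succ (c : ℕ) : (c + 1).choose 2 = c.choose 2 + c := by
  show (c + 1).choose (1 + 1) = c.choose (1 + 1) + c
  rw [Nat.choose_succ_succ' c 1, Nat.choose_one_right]
  omega

lemma countP_prod_one (s : Multiset ℕ) (hs : ∀ x ∈ s, 0 < x) :
    Multiset.countP (fun t : Multiset ℕ => t.prod = 1) (s.powersetCard 2)
      = (s.count 1).choose 2 := by
  induction s using Multiset.induction_on with
  | empty => simp [Multiset.powersetCard_zero_right]
  | cons a s ih =>
    have ha : 0 < a := hs a (Multiset.mem_cons_self a s)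
    have hs' : ∀ x ∈ s, 0 < x := fun x hx => hs x (Multiset.mem_cons_of_mem hx)
    rw [show (2 : ℕ) = 1 + 1 from rfl, Multiset.powersetCard_cons, Multiset.countP_add,
      show (1 : ℕ) + 1 = 2 from rfl, ih hs',
      Multiset.powersetCard_one, Multiset.map_map, Multiset.countP_map]
    rcases eq_or_ne a 1 with rfl | hne
    · have h1 : (Multiset.filter
          (fun x => (fun t : Multiset ℕ => t.prod = 1) ((Multiset.cons 1 ∘ singleton) x)) s)
          = Multiset.filter (fun x => x = 1) s := by
        apply Multiset.filter_congr
        intro x hx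
        simp
      rw [h1, Multiset.count_cons_self]
      have h2 : Multiset.card (Multiset.filter (fun x => x = 1) s) = s.count 1 := by
        simp [Multiset.count_eq_card_filter_eq, eq_comm]
      rw [h2, choose_two_succ]
    · have h1 : (Multiset.filter
          (fun x => (fun t : Multiset ℕ => t.prod = 1) ((Multiset.cons a ∘ singleton) x)) s)
          = 0 := by
        rw [Multiset.filter_eq_nil]
        intro x hx
        simp only [Function.comp_apply, Multiset.prod_cons, Multiset.prod_singleton]
        intro hax
        exact hne (Nat.eq_one_of_mul_eq_one_right hax)
      rw [h1, Multiset.count_cons_of_ne (Ne.symm hne)]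
      simp

lemma pre2_count_one {n : ℕ} (π : Nat.Partition n) :
    (pre2 π).count 1 = (π.parts.count 1).choose 2 := by
  rw [pre2, Multiset.count_map]
  rw [← countP_prod_one π.parts (fun x hx => π.parts_pos hx)]
  rw [Multiset.countP_eq_card_filter]
  congr 1
  apply Multiset.filter_congr
  intro t ht
  exact eq_comm

noncomputable def gcnt (n : ℕ) : ℕ := ∑ π ∈ binaryPartitions n, (π.parts.count 1).choose 2
noncomputable def hcnt (n : ℕ) : ℕ := ∑ π ∈ binaryPartitions n, π.parts.count 1
noncomputable def bcnt (n : ℕ) : ℕ := (binaryPartitions n).card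

/-- Remove one part equal to `1`. -/
def eraseOne {n : ℕ} (π : Nat.Partition (n + 1)) (h : 1 ∈ π.parts) : Nat.Partition n where
  parts := π.parts.erase 1
  parts_pos := fun hi => π.parts_pos (Multiset.mem_of_mem_erase hi)
  parts_sum := by
    have h1 : (1 ::ₘ π.parts.erase 1).sum = π.parts.sum := by rw [Multiset.cons_erase h]
    rw [Multiset.sum_cons, π.parts_sum] at h1
    omega

/-- Add a part equal to `1`. -/
def addOne {n : ℕ} (μ : Nat.Partition n) : Nat.Partition (n + 1) where
  parts := 1 ::ₘ μ.parts
  parts_pos := fun hi => by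
    rcases Multiset.mem_cons.mp hi with h | h
    · omega
    · exact μ.parts_pos h
  parts_sum := by rw [Multiset.sum_cons, μ.parts_sum, Nat.add_comm]

lemma sum_withOne (f : ℕ → ℕ) (n : ℕ) :
    ∑ π ∈ (binaryPartitions (n + 1)).filter (fun π => 1 ∈ π.parts), f (π.parts.count 1)
      = ∑ μ ∈ binaryPartitions n, f (μ.parts.count 1 + 1) := by
  refine Finset.sum_bij' (fun π hπ => eraseOne π (Finset.mem_filter.mp hπ).2)
    (fun μ _ => addOne μ) ?_ ?_ ?_ ?_ ?_
  · intro π hπ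
    rw [mem_binaryPartitions]
    intro i hi
    exact (mem_binaryPartitions.mp (Finset.mem_filter.mp hπ).1) i (Multiset.mem_of_mem_erase hi)
  · intro μ hμ
    rw [Finset.mem_filter]
    refine ⟨?_, Multiset.mem_cons_self 1 _⟩
    rw [mem_binaryPartitions]
    intro i hi
    rcases Multiset.mem_cons.mp hi with h | h
    · exact ⟨0, by simp [h]⟩
    · exact mem_binaryPartitions.mp hμ i h
  · intro π hπ
    apply Nat.Partition.ext
    exact Multiset.cons_erase (Finset.mem_filter.mp hπ).2
  · intro μ hμ
    apply Nat.Partition.ext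
    exact Multiset.erase_cons_head 1 μ.parts
  · intro π hπ
    have h1 : 1 ∈ π.parts := (Finset.mem_filter.mp hπ).2
    have hc : 1 ≤ π.parts.count 1 := Multiset.one_le_count_iff_mem.mpr h1
    have hcc : (π.parts.erase 1).count 1 + 1 = π.parts.count 1 := by
      rw [Multiset.count_erase_self]
      omega
    show f (π.parts.count 1) = f ((π.parts.erase 1).count 1 + 1)
    rw [hcc]

/-- Halve all parts of a partition whose parts are all even. -/
def halve {m : ℕ} (π : Nat.Partition (2 * m)) (h : ∀ i ∈ π.parts, 2 ∣ i) :
    Nat.Partition m where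
  parts := π.parts.map (· / 2)
  parts_pos := fun hi => by
    obtain ⟨x, hx, rfl⟩ := Multiset.mem_map.mp hi
    have h1 := π.parts_pos hx
    have h2 := h x hx
    omega
  parts_sum := by
    have key : (π.parts.map (fun x => 2 * (x / 2))).sum = 2 * m := by
      rw [Multiset.map_congr rfl (fun x hx => Nat.mul_div_cancel' (h x hx))]
      rw [Multiset.map_id']
      exact π.parts_sum
    rw [Multiset.sum_map_mul_left] at key
    omega

/-- Double all parts of a partition. -/
def double {m : ℕ} (μ : Nat.Partition m) : Nat.Partition (2 * m) where
  parts := μ.parts.map (fun x => 2 * x)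
  parts_pos := fun hi => by
    obtain ⟨x, hx, rfl⟩ := Multiset.mem_map.mp hi
    have := μ.parts_pos hx
    omega
  parts_sum := by
    rw [Multiset.sum_map_mul_left, Multiset.map_id', μ.parts_sum]

lemma card_noOne (m : ℕ) :
    ((binaryPartitions (2 * m)).filter (fun π => 1 ∉ π.parts)).card = bcnt m := by
  have hdvd : ∀ π ∈ (binaryPartitions (2 * m)).filter (fun π => 1 ∉ π.parts),
      ∀ i ∈ π.parts, 2 ∣ i := by
    intro π hπ i hi
    have h1 : 1 ∉ π.parts := (Finset.mem_filter.mp hπ).2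
    obtain ⟨k, rfl⟩ := mem_binaryPartitions.mp (Finset.mem_filter.mp hπ).1 i hi
    rcases Nat.eq_zero_or_pos k with rfl | hk
    · exact absurd (by simpa using hi) h1
    · exact dvd_pow_self 2 (by omega)
  rw [bcnt]
  refine Finset.card_bij' (fun π hπ => halve π (hdvd π hπ)) (fun μ _ => double μ)
    ?_ ?_ ?_ ?_
  · intro π hπ
    rw [mem_binaryPartitions]
    intro i hi
    obtain ⟨x, hx, rfl⟩ := Multiset.mem_map.mp hi
    have h1 : 1 ∉ π.parts := (Finset.mem_filter.mp hπ).2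
    obtain ⟨k, rfl⟩ := mem_binaryPartitions.mp (Finset.mem_filter.mp hπ).1 x hx
    rcases Nat.eq_zero_or_pos k with rfl | hk
    · exact absurd (by simpa using hx) h1
    · obtain ⟨j, rfl⟩ : ∃ j, k = j + 1 := ⟨k - 1, by omega⟩
      refine ⟨j, ?_⟩
      rw [pow_succ, Nat.mul_div_cancel _ (by norm_num)]
  · intro μ hμ
    rw [Finset.mem_filter]
    constructor
    · rw [mem_binaryPartitions]
      intro i hi
      obtain ⟨x, hx, rfl⟩ := Multiset.mem_map.mp hi
      obtain ⟨k, rfl⟩ := mem_binaryPartitions.mp hμ x hx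
      exact ⟨k + 1, by rw [pow_succ, Nat.mul_comm]⟩
    · intro hmem
      obtain ⟨x, hx, hx1⟩ := Multiset.mem_map.mp hmem
      have := μ.parts_pos hx
      omega
  · intro π hπ
    apply Nat.Partition.ext
    show ((π.parts.map (· / 2)).map (fun x => 2 * x)) = π.parts
    rw [Multiset.map_map]
    refine Eq.trans (Multiset.map_congr rfl ?_) (Multiset.map_id' _)
    intro x hx
    simp only [Function.comp_apply]
    exact Nat.mul_div_cancel' (hdvd π hπ x hx)
  · intro μ hμ
    apply Nat.Partition.ext
    show ((μ.parts.map (fun x => 2 * x)).map (· / 2)) = μ.parts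
    rw [Multiset.map_map]
    refine Eq.trans (Multiset.map_congr rfl ?_) (Multiset.map_id' _)
    intro x hx
    simp only [Function.comp_apply]
    exact Nat.mul_div_cancel_left x (by norm_num)

lemma filter_noOne_odd (m : ℕ) :
    (binaryPartitions (2 * m + 1)).filter (fun π => 1 ∉ π.parts) = ∅ := by
  rw [Finset.filter_eq_empty_iff]
  intro π hπ h1
  have hdvd : 2 ∣ π.parts.sum := by
    refine Multiset.dvd_sum (fun x hx => ?_)
    obtain ⟨k, rfl⟩ := mem_binaryPartitions.mp hπ x hx
    rcases Nat.eq_zero_or_pos k with rfl | hk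
    · exact absurd (by simpa using hx) h1
    · exact dvd_pow_self 2 (by omega)
  rw [π.parts_sum] at hdvd
  omega

lemma sum_noOne_zero (f : ℕ → ℕ) (hf : f 0 = 0) (n : ℕ) :
    ∑ π ∈ (binaryPartitions n).filter (fun π => ¬ 1 ∈ π.parts), f (π.parts.count 1) = 0 := by
  refine Finset.sum_eq_zero (fun π hπ => ?_)
  rw [Multiset.count_eq_zero.mpr (Finset.mem_filter.mp hπ).2, hf]

lemma sum_split (f : ℕ → ℕ) (n : ℕ) :
    ∑ π ∈ binaryPartitions n, f (π.parts.count 1)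
      = (∑ π ∈ (binaryPartitions n).filter (fun π => 1 ∈ π.parts), f (π.parts.count 1))
        + ∑ π ∈ (binaryPartitions n).filter (fun π => ¬ 1 ∈ π.parts), f (π.parts.count 1) :=
  (Finset.sum_filter_add_sum_filter_not _ _ _).symm

lemma gcnt_succ (n : ℕ) : gcnt (n + 1) = gcnt n + hcnt n := by
  rw [gcnt, sum_split (fun c => c.choose 2) (n + 1),
    sum_withOne (fun c => c.choose 2) n, sum_noOne_zero (fun c => c.choose 2) rfl (n + 1)]
  have : ∀ μ ∈ binaryPartitions n,
      (μ.parts.count 1 + 1).choose 2 = (μ.parts.count 1).choose 2 + μ.parts.count 1 :=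
    fun μ _ => choose_two_succ _
  rw [Finset.sum_congr rfl this, Finset.sum_add_distrib]
  rfl

lemma hcnt_succ (n : ℕ) : hcnt (n + 1) = hcnt n + bcnt n := by
  rw [hcnt, sum_split (fun c => c) (n + 1), sum_withOne (fun c => c) n,
    sum_noOne_zero (fun c => c) rfl (n + 1), Finset.sum_add_distrib, Finset.sum_const,
    smul_eq_mul, mul_one]
  rfl

lemma bcnt_succ (n : ℕ) : bcnt (n + 1)
    = bcnt n + ((binaryPartitions (n + 1)).filter (fun π => ¬ 1 ∈ π.parts)).card := by
  rw [bcnt, Finset.card_eq_sum_ones, sum_split (fun _ => 1) (n + 1),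
    sum_withOne (fun _ => 1) n]
  rw [Finset.card_eq_sum_ones ((binaryPartitions (n + 1)).filter _)]
  rw [bcnt, Finset.card_eq_sum_ones]

lemma bcnt_odd (m : ℕ) : bcnt (2 * m + 1) = bcnt (2 * m) := by
  rw [show 2 * m + 1 = (2 * m) + 1 from rfl, bcnt_succ, filter_noOne_odd]
  simp

lemma bcnt_even (m : ℕ) : bcnt (2 * m + 2) = bcnt (2 * m + 1) + bcnt (m + 1) := by
  show bcnt (2 * m + 1 + 1) = _
  rw [bcnt_succ]
  congr 1
  exact card_noOne (m + 1)

lemma parts_eq_zero (π : Nat.Partition 0) : π.parts = 0 := by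
  refine Multiset.eq_zero_of_forall_notMem (fun x hx => ?_)
  have h1 := π.parts_pos hx
  have h2 := Multiset.sum_eq_zero_iff.mp π.parts_sum x hx
  omega

lemma bcnt_zero : bcnt 0 = 1 := by
  have huniv : binaryPartitions 0 = Finset.univ := by
    refine Finset.eq_univ_of_forall (fun π => ?_)
    rw [mem_binaryPartitions]
    intro i hi
    rw [parts_eq_zero π] at hi
    simp at hi
  rw [bcnt, huniv, Finset.card_univ, Fintype.card_unique]

lemma hcnt_zero : hcnt 0 = 0 :=
  Finset.sum_eq_zero (fun π _ => by rw [parts_eq_zero π]; simp)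

lemma gcnt_zero : gcnt 0 = 0 :=
  Finset.sum_eq_zero (fun π _ => by rw [parts_eq_zero π]; simp)

lemma bcnt_one : bcnt 1 = 1 := by
  have := bcnt_odd 0
  simpa [bcnt_zero] using this

lemma hcnt_one : hcnt 1 = 1 := by rw [show (1:ℕ) = 0 + 1 from rfl, hcnt_succ, hcnt_zero, bcnt_zero]

lemma gcnt_one : gcnt 1 = 0 := by rw [show (1:ℕ) = 0 + 1 from rfl, gcnt_succ, gcnt_zero, hcnt_zero]

lemma gcnt_two : gcnt 2 = 1 := by rw [show (2:ℕ) = 1 + 1 from rfl, gcnt_succ, gcnt_one, hcnt_one]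

lemma hcnt_two : hcnt 2 = 2 := by rw [show (2:ℕ) = 1 + 1 from rfl, hcnt_succ, hcnt_one, bcnt_one]

/-- `h(k+1) = b(2k+1)`. -/
lemma hcnt_eq_bcnt : ∀ k : ℕ, hcnt (k + 1) = bcnt (2 * k + 1) := by
  intro k
  induction k with
  | zero => rw [hcnt_one, show 2 * 0 + 1 = 1 from rfl, bcnt_one]
  | succ j ih =>
    show hcnt (j + 2) = bcnt (2 * j + 3)
    have h1 : hcnt (j + 2) = hcnt (j + 1) + bcnt (j + 1) := hcnt_succ (j + 1)
    have h2 : bcnt (2 * j + 2) = bcnt (2 * j + 1) + bcnt (j + 1) := bcnt_even j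
    have h3 : bcnt (2 * j + 3) = bcnt (2 * j + 2) := bcnt_odd (j + 1)
    omega

/-- `h(2k+2) = 2 g(k+2)`. -/
lemma hcnt_even_eq : ∀ k : ℕ, hcnt (2 * k + 2) = 2 * gcnt (k + 2) := by
  intro k
  induction k with
  | zero => rw [show 2 * 0 + 2 = 2 from rfl, hcnt_two, gcnt_two]
  | succ j ih =>
    show hcnt (2 * j + 4) = 2 * gcnt (j + 3)
    have h1 : hcnt (2 * j + 4) = hcnt (2 * j + 3) + bcnt (2 * j + 3) := hcnt_succ (2 * j + 3)
    have h2 : hcnt (2 * j + 3) = hcnt (2 * j + 2) + bcnt (2 * j + 2) := hcnt_succ (2 * j + 2)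
    have h3 : bcnt (2 * j + 3) = bcnt (2 * j + 2) := bcnt_odd (j + 1)
    have h4 : gcnt (j + 3) = gcnt (j + 2) + hcnt (j + 2) := gcnt_succ (j + 2)
    have h5 : hcnt (j + 2) = bcnt (2 * j + 3) := hcnt_eq_bcnt (j + 1)
    omega

/-- `h(2k+3) = g(k+2) + g(k+3)`. -/
lemma hcnt_odd_eq (k : ℕ) : hcnt (2 * k + 3) = gcnt (k + 2) + gcnt (k + 3) := by
  have h1 : hcnt (2 * k + 3) = hcnt (2 * k + 2) + bcnt (2 * k + 2) := hcnt_succ (2 * k + 2)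
  have h2 : hcnt (2 * k + 2) = 2 * gcnt (k + 2) := hcnt_even_eq k
  have h3 : gcnt (k + 3) = gcnt (k + 2) + hcnt (k + 2) := gcnt_succ (k + 2)
  have h4 : hcnt (k + 2) = bcnt (2 * k + 3) := hcnt_eq_bcnt (k + 1)
  have h5 : bcnt (2 * k + 3) = bcnt (2 * k + 2) := bcnt_odd (k + 1)
  omega

lemma b12_eq_gcnt (n : ℕ) : b12 n = gcnt n :=
  Finset.sum_congr rfl (fun π _ => pre2_count_one π)

end B12Aux

open B12Aux in
theorem b12_recurrence :
    b12 1 = 0 ∧ b12 2 = 1 ∧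
      ∀ n : ℕ, 3 ≤ n → b12 n = b12 (n - 1) + b12 ((n + 1) / 2) + b12 ((n + 2) / 2) := by
  refine ⟨by rw [b12_eq_gcnt, gcnt_one], by rw [b12_eq_gcnt, gcnt_two], ?_⟩
  intro n hn
  rw [b12_eq_gcnt, b12_eq_gcnt, b12_eq_gcnt, b12_eq_gcnt]
  obtain ⟨m, rfl | rfl⟩ := Nat.even_or_odd' n
  · -- n = 2m even, m ≥ 2
    obtain ⟨k, rfl⟩ : ∃ k, m = k + 2 := ⟨m - 2, by omega⟩
    rw [show 2 * (k + 2) - 1 = 2 * k + 3 from by omega,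
      show (2 * (k + 2) + 1) / 2 = k + 2 from by omega,
      show (2 * (k + 2) + 2) / 2 = k + 3 from by omega,
      show 2 * (k + 2) = 2 * k + 3 + 1 from by ring]
    rw [gcnt_succ (2 * k + 3), hcnt_odd_eq k]
    omega
  · -- n = 2m+1 odd, m ≥ 1
    obtain ⟨k, rfl⟩ : ∃ k, m = k + 1 := ⟨m - 1, by omega⟩
    rw [show 2 * (k + 1) + 1 - 1 = 2 * k + 2 from by omega,
      show (2 * (k + 1) + 1 + 1) / 2 = k + 2 from by omega,
      show (2 * (k + 1) + 1 + 2) / 2 = k + 2 from by omega,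
      show 2 * (k + 1) + 1 = 2 * k + 2 + 1 from by ring]
    rw [gcnt_succ (2 * k + 2), hcnt_even_eq k]
    omega
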